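/- (Dissipativity of the third-order operator) Let β > 0, δ ≥ 0, α ∈ ℝ, and define A φ = -β φ''' + iα φ'' - δ φ' on the domain D(A) = {φ ∈ H³(0,L) : φ(0) = φ'(L) = φ''(L) = 0}. Then for every φ ∈ D(A), Re ⟨Aφ, φ⟩_{L²(0,L)} = -δ|φ(L)|²/2 - β|φ'(0)|²/2 ≤ 0; in particular A is dissipative. -/

import Mathlib

open MeasureTheory

lemma aux_hasDerivAt_mul_conj {f g : ℝ → ℂ} {f' g' : ℂ} {x : ℝ}
    (hf : HasDerivAt f f' x) (hg : HasDerivAt g g' x) :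
    HasDerivAt (fun x => f x * (starRingEnd ℂ) (g x))
      (f' * (starRingEnd ℂ) (g x) + f x * (starRingEnd ℂ) g') x := by
  exact hf.mul hg.star

lemma aux_hasDerivAt_re {F : ℝ → ℂ} {F' : ℂ} {x : ℝ} (h : HasDerivAt F F' x) :
    HasDerivAt (fun x => (F x).re) F'.re x :=
  Complex.reCLM.hasFDerivAt.comp_hasDerivAt x h

lemma aux_hasDerivAt_im {F : ℝ → ℂ} {F' : ℂ} {x : ℝ} (h : HasDerivAt F F' x) :
    HasDerivAt (fun x => (F x).im) F'.im x :=
  Complex.imCLM.hasFDerivAt.comp_hasDerivAt x h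

/-- Dissipativity of the third-order operator `Aφ = -βφ''' + iαφ'' - δφ'` with boundary
conditions `φ(0) = φ'(L) = φ''(L) = 0`:
`Re⟨Aφ,φ⟩ = -δ|φ(L)|²/2 - β|φ'(0)|²/2 ≤ 0`. -/
theorem stmt_10 (L β δ α : ℝ) (hL : 0 < L) (hβ : 0 < β) (hδ : 0 ≤ δ)
    (φ : ℝ → ℂ) (hφ : ContDiff ℝ 3 φ)
    (hbc0 : φ 0 = 0) (hbc1 : deriv φ L = 0) (hbc2 : iteratedDeriv 2 φ L = 0) :
    (∫ x in (0:ℝ)..L,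
        (-(β : ℂ) * iteratedDeriv 3 φ x + Complex.I * (α : ℂ) * iteratedDeriv 2 φ x
          - (δ : ℂ) * deriv φ x) * (starRingEnd ℂ) (φ x)).re
      = -δ * ‖φ L‖ ^ 2 / 2 - β * ‖deriv φ 0‖ ^ 2 / 2
    ∧ (∫ x in (0:ℝ)..L,
        (-(β : ℂ) * iteratedDeriv 3 φ x + Complex.I * (α : ℂ) * iteratedDeriv 2 φ x
          - (δ : ℂ) * deriv φ x) * (starRingEnd ℂ) (φ x)).re ≤ 0 := by
  set c := starRingEnd ℂ with hc
  set f1 : ℝ → ℂ := φ with hf1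
  set f2 : ℝ → ℂ := deriv φ with hf2
  set f3 : ℝ → ℂ := iteratedDeriv 2 φ with hf3
  set f4 : ℝ → ℂ := iteratedDeriv 3 φ with hf4
  have e2 : f3 = deriv f2 := by
    rw [hf3, hf2, iteratedDeriv_succ, iteratedDeriv_one]
  have e3 : f4 = deriv f3 := by rw [hf4, hf3, iteratedDeriv_succ]
  -- smoothness of the derivatives
  have h2 : ContDiff ℝ 2 f2 := by
    have := (contDiff_succ_iff_deriv.mp (show ContDiff ℝ (2 + 1) φ from hφ)).2.2
    exact this
  have h3 : ContDiff ℝ 1 f3 := by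
    rw [e2]
    exact (contDiff_succ_iff_deriv.mp (show ContDiff ℝ (1 + 1) f2 from h2)).2.2
  -- pointwise derivatives
  have d1 : ∀ x, HasDerivAt f1 (f2 x) x := fun x =>
    ((hφ.differentiable (by norm_num)) x).hasDerivAt
  have d2 : ∀ x, HasDerivAt f2 (f3 x) x := fun x => by
    rw [e2]; exact ((h2.differentiable (by norm_num)) x).hasDerivAt
  have d3 : ∀ x, HasDerivAt f3 (f4 x) x := fun x => by
    rw [e3]; exact ((h3.differentiable (by norm_num)) x).hasDerivAt
  -- continuity
  have c1 : Continuous f1 := hφ.continuous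
  have c2 : Continuous f2 := h2.continuous
  have c3 : Continuous f3 := h3.continuous
  have c4 : Continuous f4 := by
    rw [e3]; exact h3.continuous_deriv le_rfl
  -- the integrand
  set F : ℝ → ℂ := fun x => (-(β : ℂ) * f4 x + Complex.I * (α : ℂ) * f3 x - (δ : ℂ) * f2 x) * c (f1 x)
    with hF
  have cF : Continuous F :=
    (((continuous_const.mul c4).add (continuous_const.mul c3)).sub
      (continuous_const.mul c2)).mul (Complex.continuous_conj.comp c1)
  -- the primitive
  set G : ℝ → ℝ := fun x =>
    -β * ((f3 x * c (f1 x)).re - (f2 x * c (f2 x)).re / 2)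
      - α * (f2 x * c (f1 x)).im - δ * ((f1 x * c (f1 x)).re / 2) with hG
  have hGderiv : ∀ x, HasDerivAt G ((F x).re) x := by
    intro x
    have A := aux_hasDerivAt_re (aux_hasDerivAt_mul_conj (d3 x) (d1 x))
    have B := aux_hasDerivAt_re (aux_hasDerivAt_mul_conj (d2 x) (d2 x))
    have C := aux_hasDerivAt_im (aux_hasDerivAt_mul_conj (d2 x) (d1 x))
    have D := aux_hasDerivAt_re (aux_hasDerivAt_mul_conj (d1 x) (d1 x))
    have h := (((A.sub (B.div_const 2)).const_mul (-β)).sub (C.const_mul α)).sub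
      ((D.div_const 2).const_mul δ)
    refine HasDerivAt.congr_deriv h ?_
    simp only [hF, hc]
    generalize f1 x = a; generalize f2 x = b; generalize f3 x = d3'; generalize f4 x = d4'
    simp only [Complex.add_re, Complex.add_im, Complex.mul_re, Complex.mul_im,
      Complex.sub_re, Complex.sub_im, Complex.neg_re, Complex.neg_im, Complex.conj_re, Complex.conj_im,
      Complex.I_re, Complex.I_im, Complex.ofReal_re, Complex.ofReal_im]
    ring
  have key : ∫ x in (0:ℝ)..L, (F x).re = G L - G 0 :=
    intervalIntegral.integral_eq_sub_of_hasDerivAt (fun x _ => hGderiv x)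
      ((Complex.continuous_re.comp cF).intervalIntegrable 0 L)
  have hre : (∫ x in (0:ℝ)..L, F x).re = ∫ x in (0:ℝ)..L, (F x).re := by
    rw [intervalIntegral.integral_of_le hL.le, intervalIntegral.integral_of_le hL.le]
    exact (integral_re (cF.intervalIntegrable 0 L).1).symm
  have normsq : ∀ z : ℂ, (z * c z).re = ‖z‖ ^ 2 := by
    intro z
    rw [hc, Complex.mul_conj]
    simp [Complex.normSq_eq_norm_sq, ← Complex.ofReal_pow]
  have hGL : G L = -δ * ‖φ L‖ ^ 2 / 2 := by
    have hb1 : f2 L = 0 := hbc1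
    have hb2 : f3 L = 0 := hbc2
    rw [hG]
    simp only [hb1, hb2, zero_mul, mul_zero, Complex.zero_re, Complex.zero_im, zero_div,
      sub_zero, mul_zero, normsq (f1 L)]
    ring
  have hG0 : G 0 = β * ‖deriv φ 0‖ ^ 2 / 2 := by
    have hb0 : f1 0 = 0 := hbc0
    rw [hG]
    simp only [hb0, map_zero, mul_zero, Complex.zero_re, Complex.zero_im, zero_mul,
      normsq (f2 0)]
    ring
  have main : (∫ x in (0:ℝ)..L, F x).re = -δ * ‖φ L‖ ^ 2 / 2 - β * ‖deriv φ 0‖ ^ 2 / 2 := by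
    rw [hre, key, hGL, hG0]
  refine ⟨main, ?_⟩
  rw [main]
  have h1 : 0 ≤ δ * ‖φ L‖ ^ 2 / 2 := by positivity
  have h2 : 0 ≤ β * ‖deriv φ 0‖ ^ 2 / 2 := by positivity
  linarith
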